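/- Let u: Θ → S^{n−1} be regular and smooth, o ∈ R^n, C^o: Θ → (0,∞) smooth, and define s(θ) = o + 2C^o(θ)u(θ) and b(θ) = o + C^o(θ)u(θ) + ∇u(θ) g(θ)^{-1}(∇C^o(θ))ᵀ. Then ‖b(θ) − o‖ = ‖s(θ) − b(θ)‖ for all θ; i.e., b(θ) is equidistant from o and the surface point s(θ). -/

import Mathlib

open scoped RealInnerProductSpace

/-- Equidistance: with `s(θ) = o + 2C^o(θ)u(θ)` and
`b(θ) = o + C^o(θ)u(θ) + ∇u(θ) g(θ)⁻¹ (∇C^o(θ))ᵀ` (where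
`w(θ) = g(θ)⁻¹(∇C^o(θ))ᵀ` is characterized by `(∇u)ᵀ∇u w = ∇C^o`),
the point `b(θ)` is equidistant from `o` and `s(θ)`. -/
theorem stmt_15 {m : ℕ} (Θ : Set (EuclideanSpace ℝ (Fin m))) (hΘ : IsOpen Θ)
    (u : EuclideanSpace ℝ (Fin m) → EuclideanSpace ℝ (Fin (m + 1)))
    (Co : EuclideanSpace ℝ (Fin m) → ℝ)
    (o : EuclideanSpace ℝ (Fin (m + 1)))
    (hu : ∀ θ ∈ Θ, ‖u θ‖ = 1)
    (husmooth : ∀ θ ∈ Θ, ContDiffAt ℝ 1 u θ)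
    (hreg : ∀ θ ∈ Θ, Function.Injective (fderiv ℝ u θ))
    (hCo : ∀ θ ∈ Θ, 0 < Co θ)
    (hCosmooth : ∀ θ ∈ Θ, ContDiffAt ℝ 1 Co θ)
    (w : EuclideanSpace ℝ (Fin m) → EuclideanSpace ℝ (Fin m))
    (hw : ∀ θ ∈ Θ, ContinuousLinearMap.adjoint (fderiv ℝ u θ)
        (fderiv ℝ u θ (w θ)) = gradient Co θ)
    (s b : EuclideanSpace ℝ (Fin m) → EuclideanSpace ℝ (Fin (m + 1)))
    (hs : s = fun θ => o + (2 * Co θ) • u θ)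
    (hb : b = fun θ => o + Co θ • u θ + fderiv ℝ u θ (w θ)) :
    ∀ θ ∈ Θ, ‖b θ - o‖ = ‖s θ - b θ‖ := by
  intro θ hθ
  -- orthogonality: ⟪u θ, fderiv u θ v⟫ = 0
  have hdiff : DifferentiableAt ℝ u θ := (husmooth θ hθ).differentiableAt one_ne_zero
  have horth : ∀ v, ⟪u θ, fderiv ℝ u θ v⟫ = 0 := by
    intro v
    have h1 := (hdiff.hasFDerivAt.inner ℝ hdiff.hasFDerivAt)
    have hconst : (fun x => ⟪u x, u x⟫) =ᶠ[nhds θ] fun _ => (1:ℝ) := by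
      filter_upwards [hΘ.mem_nhds hθ] with x hx
      rw [real_inner_self_eq_norm_sq, hu x hx]; norm_num
    have hD0 : fderiv ℝ (fun x => ⟪u x, u x⟫) θ = fderiv ℝ (fun _ => (1:ℝ)) θ :=
      hconst.fderiv_eq
    rw [h1.fderiv, fderiv_fun_const] at hD0
    have := congrArg (fun L => L v) hD0
    simp only [ContinuousLinearMap.comp_apply, ContinuousLinearMap.prod_apply,
      fderivInnerCLM_apply, ContinuousLinearMap.zero_apply] at this
    simp only [Pi.zero_apply, ContinuousLinearMap.zero_apply] at this
    rw [real_inner_comm (u θ) ((fderiv ℝ u θ) v)] at this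
    linarith
  have key : ⟪u θ, fderiv ℝ u θ (w θ)⟫ = 0 := horth _
  have hbo : b θ - o = Co θ • u θ + fderiv ℝ u θ (w θ) := by
    rw [hb]; simp only; abel
  have hsb : s θ - b θ = Co θ • u θ - fderiv ℝ u θ (w θ) := by
    rw [hs, hb]; simp only
    rw [two_mul, add_smul]; abel
  rw [hbo, hsb]
  have h0 : ⟪(fderiv ℝ u θ) (w θ), Co θ • u θ⟫ = 0 := by
    rw [real_inner_comm, real_inner_smul_left, key, mul_zero]
  exact (norm_sub_eq_norm_add h0).symm
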